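/- Let (A,R) be a unital Rota–Baxter algebra of weight θ, R̃ := θ·Id − R, and work in the formal power series algebra A[[λ]] with R, R̃ extended coefficientwise. Let f be the unique solution of f = 1 + λR(f·x) and h the unique solution of h = 1 + λR̃(x·h), for a fixed x ∈ A. Then f·h = 1 + λθ·f·x·h. -/

import Mathlib

open PowerSeries

theorem atkinson_central {k A : Type*} [Field k] [CharZero k] [Ring A] [Algebra k A]
    (θ : k) (R : A →ₗ[k] A)
    (hR : ∀ a b : A, R a * R b = R (R a * b + a * R b - θ • (a * b)))
    (Rext Rtext : PowerSeries A → PowerSeries A)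
    (hRext : ∀ (F : PowerSeries A) (n : ℕ),
      PowerSeries.coeff n (Rext F) = R (PowerSeries.coeff n F))
    (hRtext : ∀ (F : PowerSeries A) (n : ℕ),
      PowerSeries.coeff n (Rtext F) =
        θ • PowerSeries.coeff n F - R (PowerSeries.coeff n F))
    (x : A) (f h : PowerSeries A)
    (hf : f = 1 + PowerSeries.X * Rext (f * PowerSeries.C x))
    (hh : h = 1 + PowerSeries.X * Rtext (PowerSeries.C x * h)) :
    f * h = 1 + θ • (PowerSeries.X * (f * PowerSeries.C x * h)) := by
  set a := f * PowerSeries.C x with ha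
  set b := PowerSeries.C x * h with hb
  -- pointwise Rota–Baxter identity for R and R̃ = θ•id - R
  have hpt : ∀ p q : A, R p * (θ • q - R q) =
      (θ • (R p * q) - R (R p * q)) + R (p * (θ • q - R q)) := by
    intro p q
    rw [mul_sub, hR p q]
    simp only [mul_sub, map_add, map_sub, map_smul, mul_smul_comm]
    abel
  -- extended product identity
  have hprod : ∀ F G : PowerSeries A,
      Rext F * Rtext G = Rtext (Rext F * G) + Rext (F * Rtext G) := by
    intro F G
    ext n
    rw [map_add, hRtext, hRext, PowerSeries.coeff_mul, PowerSeries.coeff_mul,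
      PowerSeries.coeff_mul, Finset.smul_sum, map_sum, map_sum,
      ← Finset.sum_sub_distrib, ← Finset.sum_add_distrib]
    refine Finset.sum_congr rfl fun ij _ => ?_
    rw [hRext, hRtext]
    exact hpt _ _
  have Rext_add : ∀ F G, Rext (F + G) = Rext F + Rext G := by
    intro F G; ext n; simp [hRext]
  have Rtext_add : ∀ F G, Rtext (F + G) = Rtext F + Rtext G := by
    intro F G; ext n; simp only [map_add, hRtext, smul_add]; abel
  have Rext_X : ∀ F, Rext (PowerSeries.X * F) = PowerSeries.X * Rext F := by
    intro F; ext n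
    cases n with
    | zero => simp [hRext, PowerSeries.coeff_zero_X_mul]
    | succ m => simp [hRext, PowerSeries.coeff_succ_X_mul]
  have Rtext_X : ∀ F, Rtext (PowerSeries.X * F) = PowerSeries.X * Rtext F := by
    intro F; ext n
    cases n with
    | zero => simp [hRtext, PowerSeries.coeff_zero_X_mul]
    | succ m => simp [hRtext, PowerSeries.coeff_succ_X_mul]
  have hsum : ∀ F, Rext F + Rtext F = θ • F := by
    intro F; ext n
    simp only [map_add, hRext, hRtext, PowerSeries.coeff_smul]
    abel
  have hXa : PowerSeries.X * (a * Rtext b) = a * (PowerSeries.X * Rtext b) := by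
    rw [← mul_assoc, ← (PowerSeries.commute_X a).eq, mul_assoc]
  -- expansions
  have e1 : Rext (a * h) = Rext a + Rext (a * (PowerSeries.X * Rtext b)) := by
    conv_lhs => rw [hh]
    rw [mul_add, mul_one, Rext_add]
  have e2 : Rtext (f * b) = Rtext b + Rtext ((PowerSeries.X * Rext a) * b) := by
    conv_lhs => rw [hf]
    rw [add_mul, one_mul, Rtext_add]
  have c1 : Rext (a * (PowerSeries.X * Rtext b)) =
      PowerSeries.X * Rext (a * Rtext b) := by rw [← hXa, Rext_X]
  have c2 : Rtext ((PowerSeries.X * Rext a) * b) =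
      PowerSeries.X * Rtext (Rext a * b) := by rw [mul_assoc, Rtext_X]
  have uv : PowerSeries.X * Rext a * (PowerSeries.X * Rtext b) =
      PowerSeries.X * (PowerSeries.X * (Rtext (Rext a * b) + Rext (a * Rtext b))) := by
    rw [mul_assoc, show Rext a * (PowerSeries.X * Rtext b)
        = PowerSeries.X * (Rext a * Rtext b) by
      rw [← mul_assoc, (PowerSeries.commute_X (Rext a)).eq, mul_assoc], hprod]
  have key : f * h = 1 + PowerSeries.X * (Rext (a * h) + Rtext (f * b)) := by
    conv_lhs => rw [hf, hh]
    rw [e1, e2, c1, c2]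
    simp only [mul_add, add_mul, one_mul, mul_one]
    rw [uv]
    simp only [mul_add]
    abel
  rw [key, mul_assoc, ← hb, hsum, mul_smul_comm]
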